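/- Let σ' be a nonempty finite CNN request sequence whose last request is r' = r(x',y'), and let σ'' = σ', r(x'',y'') be its extension by one more request. Fix λ ∈ (0,1) and α with 0 < α < (1−λ)/(2(1+λ)). Suppose F_{W_{σ''}} or G_{W_{σ''}} attains its infimum over M³ at (s_1,s_2,s_3). Then for every i ∈ {1,2,3}: (1) if s_i = (x'',y) for some y ≠ y', then (x',y) dominates s_i with respect to W_{σ'}; and (2) if s_i = (x,y'') for some x ≠ x', then (x,y') dominates s_i with respect to W_{σ'}. -/

import Mathlib

noncomputable section

/-- The L1 metric on `ℝ²` (the CNN metric space). -/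
def dL1 (p q : ℝ × ℝ) : ℝ := |p.1 - q.1| + |p.2 - q.2|

/-- The CNN request associated with a point `(x, y)`. -/
def req (p : ℝ × ℝ) : Set (ℝ × ℝ) := {q | q.1 = p.1 ∨ q.2 = p.2}

/-- The work function of a finite CNN request sequence (requests listed in order of arrival),
starting at origin `O`. -/
noncomputable def WF (O : ℝ × ℝ) : List (ℝ × ℝ) → (ℝ × ℝ) → ℝ
  | [], s => dL1 O s
  | p :: l, s => sInf ((fun t => dL1 O t + WF t l s) '' req p)

/-- The slack of a point `s` to a nonempty set `C` with respect to `W`. -/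
noncomputable def Sl (lam : ℝ) (W : ℝ × ℝ → ℝ) (s : ℝ × ℝ) (C : Set (ℝ × ℝ)) : ℝ :=
  sInf ((fun t => W t + lam * dL1 t s) '' C) - W s

/-- The rectangle spanned by two points of `ℝ²`. -/
def Boks (s1 s2 : ℝ × ℝ) : Set (ℝ × ℝ) :=
  {p | p.1 ∈ Set.uIcc s1.1 s2.1 ∧ p.2 ∈ Set.uIcc s1.2 s2.2}

/-- `H_W(s₁,s₂) = (1/2)W(s₁) + (1/2)W(s₂) − (λ/2)d(s₁,s₂)`. -/
noncomputable def Hf (lam : ℝ) (W : ℝ × ℝ → ℝ) (s1 s2 : ℝ × ℝ) : ℝ :=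
  (1 / 2) * W s1 + (1 / 2) * W s2 - (lam / 2) * dL1 s1 s2

/-- `F_W(s₁,s₂,s₃) = H_W(s₁,s₂) − α·Sl_W(s₃;{s₁,s₂})`. -/
noncomputable def Ff (lam α : ℝ) (W : ℝ × ℝ → ℝ) (s1 s2 s3 : ℝ × ℝ) : ℝ :=
  Hf lam W s1 s2 - α * Sl lam W s3 {s1, s2}

/-- `G_W(s₁,s₂,s₃) = H_W(s₁,s₂) − α·Sl_W(s₃;Boks(s₁,s₂))`. -/
noncomputable def Gf (lam α : ℝ) (W : ℝ × ℝ → ℝ) (s1 s2 s3 : ℝ × ℝ) : ℝ :=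
  Hf lam W s1 s2 - α * Sl lam W s3 (Boks s1 s2)

/-- `t` dominates `s` with respect to `W` if `W s = W t + d(s,t)`. -/
def Dominates (W : ℝ × ℝ → ℝ) (t s : ℝ × ℝ) : Prop :=
  W s = W t + dL1 s t

lemma dL1_nonneg (p q : ℝ × ℝ) : 0 ≤ dL1 p q := by
  have := abs_nonneg (p.1 - q.1); have := abs_nonneg (p.2 - q.2); simp [dL1]; linarith

lemma dL1_comm (p q : ℝ × ℝ) : dL1 p q = dL1 q p := by
  simp [dL1, abs_sub_comm]

lemma dL1_self (p : ℝ × ℝ) : dL1 p p = 0 := by simp [dL1]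

lemma dL1_triangle (p q r : ℝ × ℝ) : dL1 p r ≤ dL1 p q + dL1 q r := by
  have h1 := abs_sub_le p.1 q.1 r.1
  have h2 := abs_sub_le p.2 q.2 r.2
  simp only [dL1]; linarith

lemma mem_req_self (p : ℝ × ℝ) : p ∈ req p := Or.inl rfl

lemma req_nonempty (p : ℝ × ℝ) : (req p).Nonempty := ⟨p, mem_req_self p⟩

lemma WF_nonneg : ∀ (l : List (ℝ × ℝ)) (O s : ℝ × ℝ), 0 ≤ WF O l s
  | [], O, s => dL1_nonneg O s
  | p :: l, O, s => by
      refine Real.sInf_nonneg ?_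
      rintro x ⟨t, _, rfl⟩
      exact add_nonneg (dL1_nonneg O t) (WF_nonneg l t s)

lemma bddBelow_WF_img (O s : ℝ × ℝ) (l : List (ℝ × ℝ)) (S : Set (ℝ × ℝ)) :
    BddBelow ((fun t => dL1 O t + WF t l s) '' S) := by
  refine ⟨0, ?_⟩; rintro x ⟨t, _, rfl⟩
  exact add_nonneg (dL1_nonneg O t) (WF_nonneg l t s)

lemma WF_lip : ∀ (l : List (ℝ × ℝ)) (O s s' : ℝ × ℝ), WF O l s ≤ WF O l s' + dL1 s' s
  | [], O, s, s' => dL1_triangle O s' s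
  | p :: l, O, s, s' => by
      show sInf _ ≤ sInf _ + _
      have h : sInf ((fun t => dL1 O t + WF t l s) '' req p) - dL1 s' s ≤
          sInf ((fun t => dL1 O t + WF t l s') '' req p) := by
        refine le_csInf (Set.Nonempty.image _ (req_nonempty p)) ?_
        rintro b ⟨t, ht, rfl⟩
        have h1 : sInf ((fun t => dL1 O t + WF t l s) '' req p) ≤ dL1 O t + WF t l s :=
          csInf_le (bddBelow_WF_img O s l _) ⟨t, ht, rfl⟩
        have h2 := WF_lip l t s s'
        simp only; linarith
      linarith

lemma const_add_sInf {β : Type*} (c : ℝ) (f : β → ℝ) (S : Set β) (hS : S.Nonempty)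
    (hb : BddBelow (f '' S)) : sInf ((fun x => c + f x) '' S) = c + sInf (f '' S) := by
  have h := Monotone.map_csInf_of_continuousAt (f := fun y => c + y) (A := f '' S)
    (continuousAt_const.add continuousAt_id) (fun a b hab => by simpa using hab)
    (hS.image f) hb
  rw [Set.image_image] at h
  exact h.symm

lemma sInf_sInf_le {β γ : Type*} {U : Set β} {T : Set γ} (hU : U.Nonempty) (hT : T.Nonempty)
    (g : β → γ → ℝ) (hg : ∀ u t, 0 ≤ g u t) :
    sInf ((fun u => sInf ((fun t => g u t) '' T)) '' U) ≤
      sInf ((fun t => sInf ((fun u => g u t) '' U)) '' T) := by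
  refine le_csInf (hT.image _) ?_
  rintro b ⟨t, ht, rfl⟩
  refine le_csInf (hU.image _) ?_
  rintro b' ⟨u, hu, rfl⟩
  have h1 : sInf ((fun u => sInf ((fun t => g u t) '' T)) '' U) ≤ sInf ((fun t => g u t) '' T) := by
    refine csInf_le ⟨0, ?_⟩ ⟨u, hu, rfl⟩
    rintro x ⟨u', _, rfl⟩
    exact Real.sInf_nonneg (by rintro x ⟨t', _, rfl⟩; exact hg u' t')
  have h2 : sInf ((fun t => g u t) '' T) ≤ g u t := by
    refine csInf_le ⟨0, ?_⟩ ⟨t, ht, rfl⟩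
    rintro x ⟨t', _, rfl⟩; exact hg u t'
  simp only; linarith

lemma sInf_sInf_comm {β γ : Type*} {U : Set β} {T : Set γ} (hU : U.Nonempty) (hT : T.Nonempty)
    (g : β → γ → ℝ) (hg : ∀ u t, 0 ≤ g u t) :
    sInf ((fun u => sInf ((fun t => g u t) '' T)) '' U) =
      sInf ((fun t => sInf ((fun u => g u t) '' U)) '' T) :=
  le_antisymm (sInf_sInf_le hU hT g hg) (sInf_sInf_le hT hU (fun t u => g u t) (fun t u => hg u t))

lemma WF_append : ∀ (l : List (ℝ × ℝ)) (O : ℝ × ℝ) (p s : ℝ × ℝ),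
    WF O (l ++ [p]) s = sInf ((fun t => WF O l t + dL1 t s) '' req p)
  | [], O, p, s => by simp [WF]
  | q :: l, O, p, s => by
      show sInf ((fun u => dL1 O u + WF u (l ++ [p]) s) '' req q) = _
      have e1 : ∀ u ∈ req q, dL1 O u + WF u (l ++ [p]) s =
          sInf ((fun t => dL1 O u + (WF u l t + dL1 t s)) '' req p) := by
        intro u _
        rw [WF_append l u p s, const_add_sInf _ _ _ (req_nonempty p)]
        refine ⟨0, ?_⟩; rintro x ⟨t, _, rfl⟩
        exact add_nonneg (WF_nonneg l u t) (dL1_nonneg t s)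
      rw [Set.image_congr e1,
        sInf_sInf_comm (req_nonempty q) (req_nonempty p)
          (fun u t => dL1 O u + (WF u l t + dL1 t s))
          (fun u t => add_nonneg (dL1_nonneg O u)
            (add_nonneg (WF_nonneg l u t) (dL1_nonneg t s)))]
      refine congrArg sInf (Set.image_congr ?_)
      intro t _
      show sInf _ = WF O (q :: l) t + dL1 t s
      show sInf _ = sInf ((fun u => dL1 O u + WF u l t) '' req q) + dL1 t s
      rw [add_comm _ (dL1 t s), ← const_add_sInf (dL1 t s) _ _ (req_nonempty q)
        (bddBelow_WF_img O t l _)]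
      refine congrArg sInf (Set.image_congr ?_)
      intro u _; ring

lemma WF_le_mem (O : ℝ × ℝ) (l : List (ℝ × ℝ)) (p t s : ℝ × ℝ) (ht : t ∈ req p) :
    WF O (l ++ [p]) s ≤ WF O l t + dL1 t s := by
  rw [WF_append]
  refine csInf_le ⟨0, ?_⟩ ⟨t, ht, rfl⟩
  rintro x ⟨t', _, rfl⟩; exact add_nonneg (WF_nonneg l O t') (dL1_nonneg t' s)

lemma WF_mono (O : ℝ × ℝ) (l : List (ℝ × ℝ)) (p s : ℝ × ℝ) :
    WF O l s ≤ WF O (l ++ [p]) s := by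
  rw [WF_append]
  refine le_csInf ((req_nonempty p).image _) ?_
  rintro b ⟨t, _, rfl⟩
  exact WF_lip l O s t

lemma WF_eq_on_req (O : ℝ × ℝ) (l : List (ℝ × ℝ)) (p s : ℝ × ℝ) (hs : s ∈ req p) :
    WF O (l ++ [p]) s = WF O l s := by
  refine le_antisymm ?_ (WF_mono O l p s)
  have := WF_le_mem O l p s s hs
  rwa [dL1_self, add_zero] at this

lemma bddBelow_Sl_img (lam : ℝ) (hlam : 0 ≤ lam) (W : ℝ × ℝ → ℝ) (hW0 : ∀ s, 0 ≤ W s)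
    (s : ℝ × ℝ) (C : Set (ℝ × ℝ)) : BddBelow ((fun t => W t + lam * dL1 t s) '' C) := by
  refine ⟨0, ?_⟩; rintro x ⟨u, _, rfl⟩
  exact add_nonneg (hW0 u) (mul_nonneg hlam (dL1_nonneg u s))

lemma Hf_comm (lam : ℝ) (W : ℝ × ℝ → ℝ) (s1 s2 : ℝ × ℝ) :
    Hf lam W s1 s2 = Hf lam W s2 s1 := by
  unfold Hf; rw [dL1_comm]; ring

lemma Hf_drop (lam : ℝ) (hlam : 0 ≤ lam) (W : ℝ × ℝ → ℝ) (s1 s2 t : ℝ × ℝ)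
    (hdom : W s1 = W t + dL1 s1 t) :
    Hf lam W t s2 ≤ Hf lam W s1 s2 - (1 - lam) / 2 * dL1 s1 t := by
  have htri := dL1_triangle s1 t s2
  have h := mul_le_mul_of_nonneg_left
    (show dL1 s1 s2 - dL1 s1 t ≤ dL1 t s2 by linarith)
    (show (0:ℝ) ≤ lam / 2 by linarith)
  unfold Hf; nlinarith [dL1_nonneg s1 t]

lemma Sl_dom_pt (lam : ℝ) (hlam : 0 ≤ lam) (W : ℝ × ℝ → ℝ) (hW0 : ∀ s, 0 ≤ W s)
    {C : Set (ℝ × ℝ)} (hC : C.Nonempty) (s3 t : ℝ × ℝ)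
    (hdom : W s3 = W t + dL1 s3 t) :
    Sl lam W s3 C + (1 - lam) * dL1 s3 t ≤ Sl lam W t C := by
  have hinf : sInf ((fun u => W u + lam * dL1 u s3) '' C) - lam * dL1 s3 t ≤
      sInf ((fun u => W u + lam * dL1 u t) '' C) := by
    refine le_csInf (hC.image _) ?_
    rintro b ⟨u, hu, rfl⟩
    have h1 : sInf ((fun u => W u + lam * dL1 u s3) '' C) ≤ W u + lam * dL1 u s3 :=
      csInf_le (bddBelow_Sl_img lam hlam W hW0 s3 C) ⟨u, hu, rfl⟩
    have htri := dL1_triangle u t s3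
    have h2 := mul_le_mul_of_nonneg_left
      (show dL1 u s3 - dL1 s3 t ≤ dL1 u t by rw [dL1_comm t s3] at htri; linarith) hlam
    simp only; nlinarith
  unfold Sl; linarith

lemma Sl_map (lam : ℝ) (hlam : 0 ≤ lam) (W : ℝ × ℝ → ℝ) (hW0 : ∀ s, 0 ≤ W s)
    (hlip : ∀ s t, W s ≤ W t + dL1 t s) {C C' : Set (ℝ × ℝ)} (hC' : C'.Nonempty)
    (D : ℝ) (hD : 0 ≤ D) (hmap : ∀ u' ∈ C', ∃ u ∈ C, dL1 u u' ≤ D) (s3 : ℝ × ℝ) :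
    Sl lam W s3 C - (1 + lam) * D ≤ Sl lam W s3 C' := by
  have hinf : sInf ((fun u => W u + lam * dL1 u s3) '' C) - (1 + lam) * D ≤
      sInf ((fun u => W u + lam * dL1 u s3) '' C') := by
    refine le_csInf (hC'.image _) ?_
    rintro b ⟨u', hu', rfl⟩
    obtain ⟨u, hu, hdu⟩ := hmap u' hu'
    have h1 : sInf ((fun u => W u + lam * dL1 u s3) '' C) ≤ W u + lam * dL1 u s3 :=
      csInf_le (bddBelow_Sl_img lam hlam W hW0 s3 C) ⟨u, hu, rfl⟩
    have h2 : W u ≤ W u' + dL1 u u' := by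
      have := hlip u u'; rwa [dL1_comm u' u] at this
    have htri := dL1_triangle u u' s3
    have h3 := mul_le_mul_of_nonneg_left
      (show dL1 u s3 - dL1 u u' ≤ dL1 u' s3 by linarith) hlam
    have h4 := mul_le_mul_of_nonneg_left hdu hlam
    simp only; nlinarith
  unfold Sl; linarith

lemma clamp_spec (a b t v : ℝ) (hv : v ∈ Set.uIcc t b) :
    ∃ u ∈ Set.uIcc a b, |u - v| ≤ |t - a| := by
  rw [Set.mem_uIcc] at hv
  have habs1 : t - a ≤ |t - a| := le_abs_self _
  have habs2 : a - t ≤ |t - a| := by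
    have := neg_abs_le (t - a); linarith
  have habs0 : (0:ℝ) ≤ |t - a| := abs_nonneg _
  rcases le_total v (a ⊓ b) with h1 | h1
  · refine ⟨a ⊓ b, ⟨le_rfl, inf_le_sup⟩, ?_⟩
    rw [abs_of_nonneg (by linarith : (0:ℝ) ≤ a ⊓ b - v)]
    have hia : a ⊓ b ≤ a := inf_le_left
    have hib : a ⊓ b ≤ b := inf_le_right
    rcases hv with ⟨htv, _⟩ | ⟨hbv, _⟩
    · linarith
    · linarith
  · rcases le_total v (a ⊔ b) with h2 | h2
    · exact ⟨v, ⟨h1, h2⟩, by simp⟩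
    · refine ⟨a ⊔ b, ⟨inf_le_sup, le_rfl⟩, ?_⟩
      rw [abs_of_nonpos (by linarith : a ⊔ b - v ≤ 0)]
      have hsa : a ≤ a ⊔ b := le_sup_left
      have hsb : b ≤ a ⊔ b := le_sup_right
      rcases hv with ⟨_, hvb⟩ | ⟨_, hvt⟩
      · linarith
      · linarith

lemma boks_map1 (s1 s2 t : ℝ × ℝ) :
    ∀ u' ∈ Boks t s2, ∃ u ∈ Boks s1 s2, dL1 u u' ≤ dL1 s1 t := by
  rintro u' ⟨h1, h2⟩
  obtain ⟨u1, hu1, hb1⟩ := clamp_spec s1.1 s2.1 t.1 u'.1 h1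
  obtain ⟨u2, hu2, hb2⟩ := clamp_spec s1.2 s2.2 t.2 u'.2 h2
  refine ⟨(u1, u2), ⟨hu1, hu2⟩, ?_⟩
  simp only [dL1]
  rw [abs_sub_comm t.1 s1.1] at hb1
  rw [abs_sub_comm t.2 s1.2] at hb2
  exact add_le_add hb1 hb2

lemma boks_map2 (s1 s2 t : ℝ × ℝ) :
    ∀ u' ∈ Boks s1 t, ∃ u ∈ Boks s1 s2, dL1 u u' ≤ dL1 s2 t := by
  rintro u' ⟨h1, h2⟩
  rw [Set.uIcc_comm] at h1 h2
  obtain ⟨u1, hu1, hb1⟩ := clamp_spec s2.1 s1.1 t.1 u'.1 h1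
  obtain ⟨u2, hu2, hb2⟩ := clamp_spec s2.2 s1.2 t.2 u'.2 h2
  rw [Set.uIcc_comm] at hu1 hu2
  refine ⟨(u1, u2), ⟨hu1, hu2⟩, ?_⟩
  simp only [dL1]
  rw [abs_sub_comm t.1 s2.1] at hb1
  rw [abs_sub_comm t.2 s2.2] at hb2
  exact add_le_add hb1 hb2

lemma no_strict_dom (lam α : ℝ) (h0 : 0 < lam) (h1 : lam < 1) (hα0 : 0 < α)
    (hα1 : α < (1 - lam) / (2 * (1 + lam))) (W : ℝ × ℝ → ℝ) (hW0 : ∀ s, 0 ≤ W s)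
    (hlip : ∀ s t, W s ≤ W t + dL1 t s) (s1 s2 s3 : ℝ × ℝ)
    (hmin : (∀ t1 t2 t3 : ℝ × ℝ, Ff lam α W s1 s2 s3 ≤ Ff lam α W t1 t2 t3) ∨
            (∀ t1 t2 t3 : ℝ × ℝ, Gf lam α W s1 s2 s3 ≤ Gf lam α W t1 t2 t3))
    (s : ℝ × ℝ) (hs : s ∈ ({s1, s2, s3} : Set (ℝ × ℝ))) (t : ℝ × ℝ)
    (hdom : W s = W t + dL1 s t) : dL1 s t ≤ 0 := by
  by_contra hd
  push_neg at hd
  have h2 : α * (1 + lam) < (1 - lam) / 2 := by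
    rw [lt_div_iff₀ (by linarith)] at hα1; nlinarith
  have hprod : α * (1 + lam) * dL1 s t < (1 - lam) / 2 * dL1 s t :=
    mul_lt_mul_of_pos_right h2 hd
  have hprod3 : 0 < α * ((1 - lam) * dL1 s t) :=
    mul_pos hα0 (mul_pos (by linarith) hd)
  simp only [Set.mem_insert_iff, Set.mem_singleton_iff] at hs
  rcases hs with rfl | rfl | rfl
  · -- s1 = s
    have hH : Hf lam W t s2 ≤ Hf lam W s s2 - (1 - lam) / 2 * dL1 s t :=
      Hf_drop lam h0.le W s s2 t hdom
    rcases hmin with hm | hm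
    · have hm' := hm t s2 s3
      have hmap : ∀ u' ∈ ({t, s2} : Set (ℝ × ℝ)), ∃ u ∈ ({s, s2} : Set (ℝ × ℝ)),
          dL1 u u' ≤ dL1 s t := by
        rintro u' (rfl | rfl)
        · exact ⟨s, Or.inl rfl, le_rfl⟩
        · exact ⟨u', Or.inr rfl, by rw [dL1_self]; exact hd.le⟩
      have hSl := Sl_map lam h0.le W hW0 hlip
        (C := {s, s2}) (C' := {t, s2}) ⟨t, Or.inl rfl⟩ (dL1 s t) hd.le hmap s3
      have hα' := mul_le_mul_of_nonneg_left hSl hα0.le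
      simp only [Ff] at hm'
      nlinarith
    · have hm' := hm t s2 s3
      have hSl := Sl_map lam h0.le W hW0 hlip
        (C := Boks s s2) (C' := Boks t s2)
        ⟨s2, Set.right_mem_uIcc, Set.right_mem_uIcc⟩ (dL1 s t) hd.le
        (boks_map1 s s2 t) s3
      have hα' := mul_le_mul_of_nonneg_left hSl hα0.le
      simp only [Gf] at hm'
      nlinarith
  · -- s2 = s
    have hH : Hf lam W s1 t ≤ Hf lam W s1 s - (1 - lam) / 2 * dL1 s t := by
      rw [Hf_comm lam W s1 t, Hf_comm lam W s1 s]
      exact Hf_drop lam h0.le W s s1 t hdom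
    rcases hmin with hm | hm
    · have hm' := hm s1 t s3
      have hmap : ∀ u' ∈ ({s1, t} : Set (ℝ × ℝ)), ∃ u ∈ ({s1, s} : Set (ℝ × ℝ)),
          dL1 u u' ≤ dL1 s t := by
        rintro u' (rfl | rfl)
        · exact ⟨u', Or.inl rfl, by rw [dL1_self]; exact hd.le⟩
        · exact ⟨s, Or.inr rfl, le_rfl⟩
      have hSl := Sl_map lam h0.le W hW0 hlip
        (C := {s1, s}) (C' := {s1, t}) ⟨s1, Or.inl rfl⟩ (dL1 s t) hd.le hmap s3
      have hα' := mul_le_mul_of_nonneg_left hSl hα0.le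
      simp only [Ff] at hm'
      nlinarith
    · have hm' := hm s1 t s3
      have hSl := Sl_map lam h0.le W hW0 hlip
        (C := Boks s1 s) (C' := Boks s1 t)
        ⟨s1, Set.left_mem_uIcc, Set.left_mem_uIcc⟩ (dL1 s t) hd.le
        (boks_map2 s1 s t) s3
      have hα' := mul_le_mul_of_nonneg_left hSl hα0.le
      simp only [Gf] at hm'
      nlinarith
  · -- s3 = s
    rcases hmin with hm | hm
    · have hm' := hm s1 s2 t
      have hSl := Sl_dom_pt lam h0.le W hW0 (C := {s1, s2}) ⟨s1, Or.inl rfl⟩ s t hdom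
      have hα' := mul_le_mul_of_nonneg_left hSl hα0.le
      simp only [Ff] at hm'
      nlinarith
    · have hm' := hm s1 s2 t
      have hSl := Sl_dom_pt lam h0.le W hW0
        (C := Boks s1 s2) ⟨s1, Set.left_mem_uIcc, Set.left_mem_uIcc⟩ s t hdom
      have hα' := mul_le_mul_of_nonneg_left hSl hα0.le
      simp only [Gf] at hm'
      nlinarith

noncomputable def lineV (Wl : ℝ × ℝ → ℝ) (x0 : ℝ) (z : ℝ × ℝ) : ℝ :=
  sInf ((fun u => Wl u + dL1 u z) '' {u : ℝ × ℝ | u.1 = x0})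

noncomputable def lineH (Wl : ℝ × ℝ → ℝ) (y0 : ℝ) (z : ℝ × ℝ) : ℝ :=
  sInf ((fun u => Wl u + dL1 u z) '' {u : ℝ × ℝ | u.2 = y0})

lemma bddBelow_line_img (O : ℝ × ℝ) (l : List (ℝ × ℝ)) (z : ℝ × ℝ) (S : Set (ℝ × ℝ)) :
    BddBelow ((fun u => WF O l u + dL1 u z) '' S) := by
  refine ⟨0, ?_⟩; rintro x ⟨u, _, rfl⟩
  exact add_nonneg (WF_nonneg l O u) (dL1_nonneg u z)

lemma lineV_ge (O : ℝ × ℝ) (l : List (ℝ × ℝ)) (x0 y0 : ℝ) (z : ℝ × ℝ) :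
    WF O (l ++ [(x0, y0)]) z ≤ lineV (WF O l) x0 z := by
  rw [WF_append]
  have hne : ({u : ℝ × ℝ | u.1 = x0}).Nonempty := ⟨(x0, 0), rfl⟩
  exact csInf_le_csInf (bddBelow_line_img O l z _) (hne.image _)
    (Set.image_mono (fun u hu => Or.inl hu))

lemma lineH_ge (O : ℝ × ℝ) (l : List (ℝ × ℝ)) (x0 y0 : ℝ) (z : ℝ × ℝ) :
    WF O (l ++ [(x0, y0)]) z ≤ lineH (WF O l) y0 z := by
  rw [WF_append]
  have hne : ({u : ℝ × ℝ | u.2 = y0}).Nonempty := ⟨(0, y0), rfl⟩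
  exact csInf_le_csInf (bddBelow_line_img O l z _) (hne.image _)
    (Set.image_mono (fun u hu => Or.inr hu))

lemma line_min_le (O : ℝ × ℝ) (l : List (ℝ × ℝ)) (x0 y0 : ℝ) (z : ℝ × ℝ) :
    min (lineV (WF O l) x0 z) (lineH (WF O l) y0 z) ≤ WF O (l ++ [(x0, y0)]) z := by
  rw [WF_append]
  refine le_csInf ((req_nonempty _).image _) ?_
  rintro b ⟨u, hu, rfl⟩
  rcases hu with h | h
  · exact (min_le_left _ _).trans (csInf_le (bddBelow_line_img O l z _) ⟨u, h, rfl⟩)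
  · exact (min_le_right _ _).trans (csInf_le (bddBelow_line_img O l z _) ⟨u, h, rfl⟩)

lemma lineV_trans (O : ℝ × ℝ) (l : List (ℝ × ℝ)) (x0 : ℝ) (z : ℝ × ℝ) :
    lineV (WF O l) x0 z = |z.1 - x0| + lineV (WF O l) x0 (x0, z.2) := by
  unfold lineV
  have e : ∀ u ∈ {u : ℝ × ℝ | u.1 = x0}, WF O l u + dL1 u z =
      |z.1 - x0| + (WF O l u + dL1 u (x0, z.2)) := by
    intro u hu
    have h : u.1 = x0 := hu
    simp only [dL1, h, abs_sub_comm x0 z.1, sub_self, abs_zero]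
    ring
  have hne : ({u : ℝ × ℝ | u.1 = x0}).Nonempty := ⟨(x0, 0), rfl⟩
  rw [Set.image_congr e, const_add_sInf _ _ _ hne (bddBelow_line_img O l _ _)]

lemma lineH_trans (O : ℝ × ℝ) (l : List (ℝ × ℝ)) (y0 : ℝ) (z : ℝ × ℝ) :
    lineH (WF O l) y0 z = |z.2 - y0| + lineH (WF O l) y0 (z.1, y0) := by
  unfold lineH
  have e : ∀ u ∈ {u : ℝ × ℝ | u.2 = y0}, WF O l u + dL1 u z =
      |z.2 - y0| + (WF O l u + dL1 u (z.1, y0)) := by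
    intro u hu
    have h : u.2 = y0 := hu
    simp only [dL1, h, abs_sub_comm y0 z.2, sub_self, abs_zero]
    ring
  have hne : ({u : ℝ × ℝ | u.2 = y0}).Nonempty := ⟨(0, y0), rfl⟩
  rw [Set.image_congr e, const_add_sInf _ _ _ hne (bddBelow_line_img O l _ _)]

/-- Let `σ'` have last request `r(x',y')` and let `σ'' = σ', r(x'',y'')`. If `F_{W_{σ''}}` or
`G_{W_{σ''}}` is minimized at `(s₁,s₂,s₃)`, then for each `sᵢ`: if `sᵢ = (x'',y)` with
`y ≠ y'` then `(x',y)` dominates `sᵢ` w.r.t. `W_{σ'}`, and if `sᵢ = (x,y'')` with `x ≠ x'`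
then `(x,y')` dominates `sᵢ` w.r.t. `W_{σ'}`. -/
theorem minimizer_domination (lam α : ℝ) (h0 : 0 < lam) (h1 : lam < 1)
    (hα0 : 0 < α) (hα1 : α < (1 - lam) / (2 * (1 + lam)))
    (O : ℝ × ℝ) (l : List (ℝ × ℝ)) (x' y' x'' y'' : ℝ) (s1 s2 s3 : ℝ × ℝ)
    (hmin :
      (∀ t1 t2 t3 : ℝ × ℝ,
        Ff lam α (WF O (l ++ [(x', y'), (x'', y'')])) s1 s2 s3 ≤
          Ff lam α (WF O (l ++ [(x', y'), (x'', y'')])) t1 t2 t3) ∨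
      (∀ t1 t2 t3 : ℝ × ℝ,
        Gf lam α (WF O (l ++ [(x', y'), (x'', y'')])) s1 s2 s3 ≤
          Gf lam α (WF O (l ++ [(x', y'), (x'', y'')])) t1 t2 t3)) :
    ∀ s ∈ ({s1, s2, s3} : Set (ℝ × ℝ)),
      (s.1 = x'' → s.2 ≠ y' → Dominates (WF O (l ++ [(x', y')])) (x', s.2) s) ∧
      (s.2 = y'' → s.1 ≠ x' → Dominates (WF O (l ++ [(x', y')])) (s.1, y') s) := by
  have hl : l ++ [(x', y'), (x'', y'')] = (l ++ [(x', y')]) ++ [(x'', y'')] := by simp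
  rw [hl] at hmin
  have key := no_strict_dom lam α h0 h1 hα0 hα1
    (WF O ((l ++ [(x', y')]) ++ [(x'', y'')]))
    (fun z => WF_nonneg _ O z) (fun z w => WF_lip _ O z w) s1 s2 s3 hmin
  intro s hs
  constructor
  · intro hx hy
    by_contra hnd
    have hlipW1 : WF O (l ++ [(x', y')]) s ≤
        WF O (l ++ [(x', y')]) (x', s.2) + dL1 s (x', s.2) := by
      have := WF_lip (l ++ [(x', y')]) O s (x', s.2)
      rwa [dL1_comm (x', s.2) s] at this
    have hlt : WF O (l ++ [(x', y')]) s <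
        WF O (l ++ [(x', y')]) (x', s.2) + dL1 s (x', s.2) := lt_of_le_of_ne hlipW1 hnd
    have hds : dL1 s (x', s.2) = |s.1 - x'| := by simp [dL1]
    have hA : WF O (l ++ [(x', y')]) s < lineV (WF O l) x' s := by
      have h1 := lineV_trans O l x' s
      have h2 := lineV_ge O l x' y' (x', s.2)
      rw [hds] at hlt
      linarith
    have hB : lineH (WF O l) y' s ≤ WF O (l ++ [(x', y')]) s := by
      have hm := line_min_le O l x' y' s
      rcases le_total (lineV (WF O l) x' s) (lineH (WF O l) y' s) with h | h
      · rw [min_eq_left h] at hm; linarith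
      · rw [min_eq_right h] at hm; exact hm
    set t : ℝ × ℝ := (s.1, y') with ht
    have hts : dL1 s t = |s.2 - y'| := by simp [dL1, ht]
    have hmem_s : s ∈ req (x'', y'') := Or.inl hx
    have hmem_t : t ∈ req (x'', y'') := Or.inl hx
    have hW2s := WF_eq_on_req O (l ++ [(x', y')]) (x'', y'') s hmem_s
    have hW2t := WF_eq_on_req O (l ++ [(x', y')]) (x'', y'') t hmem_t
    have hup : WF O ((l ++ [(x', y')]) ++ [(x'', y'')]) t + dL1 s t ≤
        WF O ((l ++ [(x', y')]) ++ [(x'', y'')]) s := by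
      have h3 := lineH_ge O l x' y' t
      have h4 := lineH_trans O l y' s
      rw [hW2s, hW2t, hts]
      linarith
    have hdown : WF O ((l ++ [(x', y')]) ++ [(x'', y'')]) s ≤
        WF O ((l ++ [(x', y')]) ++ [(x'', y'')]) t + dL1 s t := by
      have := WF_lip ((l ++ [(x', y')]) ++ [(x'', y'')]) O s t
      rwa [dL1_comm t s] at this
    have heq := le_antisymm hdown hup
    have hkey := key s hs t heq
    have hpos : 0 < |s.2 - y'| := abs_pos.2 (sub_ne_zero.2 hy)
    rw [hts] at hkey
    linarith
  · intro hy hx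
    by_contra hnd
    have hlipW1 : WF O (l ++ [(x', y')]) s ≤
        WF O (l ++ [(x', y')]) (s.1, y') + dL1 s (s.1, y') := by
      have := WF_lip (l ++ [(x', y')]) O s (s.1, y')
      rwa [dL1_comm (s.1, y') s] at this
    have hlt : WF O (l ++ [(x', y')]) s <
        WF O (l ++ [(x', y')]) (s.1, y') + dL1 s (s.1, y') := lt_of_le_of_ne hlipW1 hnd
    have hds : dL1 s (s.1, y') = |s.2 - y'| := by simp [dL1]
    have hBgt : WF O (l ++ [(x', y')]) s < lineH (WF O l) y' s := by
      have h1 := lineH_trans O l y' s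
      have h2 := lineH_ge O l x' y' (s.1, y')
      rw [hds] at hlt
      linarith
    have hAle : lineV (WF O l) x' s ≤ WF O (l ++ [(x', y')]) s := by
      have hm := line_min_le O l x' y' s
      rcases le_total (lineV (WF O l) x' s) (lineH (WF O l) y' s) with h | h
      · rw [min_eq_left h] at hm; exact hm
      · rw [min_eq_right h] at hm; linarith
    set t : ℝ × ℝ := (x', s.2) with ht
    have hts : dL1 s t = |s.1 - x'| := by simp [dL1, ht]
    have hmem_s : s ∈ req (x'', y'') := Or.inr hy
    have hmem_t : t ∈ req (x'', y'') := Or.inr hy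
    have hW2s := WF_eq_on_req O (l ++ [(x', y')]) (x'', y'') s hmem_s
    have hW2t := WF_eq_on_req O (l ++ [(x', y')]) (x'', y'') t hmem_t
    have hup : WF O ((l ++ [(x', y')]) ++ [(x'', y'')]) t + dL1 s t ≤
        WF O ((l ++ [(x', y')]) ++ [(x'', y'')]) s := by
      have h3 := lineV_ge O l x' y' t
      have h4 := lineV_trans O l x' s
      rw [hW2s, hW2t, hts]
      linarith
    have hdown : WF O ((l ++ [(x', y')]) ++ [(x'', y'')]) s ≤
        WF O ((l ++ [(x', y')]) ++ [(x'', y'')]) t + dL1 s t := by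
      have := WF_lip ((l ++ [(x', y')]) ++ [(x'', y'')]) O s t
      rwa [dL1_comm t s] at this
    have heq := le_antisymm hdown hup
    have hkey := key s hs t heq
    have hpos : 0 < |s.1 - x'| := abs_pos.2 (sub_ne_zero.2 hx)
    rw [hts] at hkey
    linarith
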